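/- For every m ≥ 0, the ℤ[v,v^{−1}]-submodule 𝓡_m of ℚ(v)[x] spanned by {P′_k : k ≥ m} is an ideal of the ℤ[v,v^{−1}]-subalgebra 𝓡 of ℚ(v)[x] generated by the elements P′_n (n ≥ 1): for every y ∈ 𝓡 and every k ≥ m, the product y · P′_k is a ℤ[v,v^{−1}]-linear combination of finitely many elements P′_j with j ≥ m. -/

import Mathlib

/-- The quantum integer `[n] = (v^n − v^{−n})/(v − v^{−1})` in `ℚ(v)`. -/
noncomputable def qInt (n : ℕ) : RatFunc ℚ :=
  (RatFunc.X ^ n - (RatFunc.X)⁻¹ ^ n) / (RatFunc.X - (RatFunc.X)⁻¹)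

/-- The quantum factorial `[n]! = [1][2]⋯[n]` in `ℚ(v)`. -/
noncomputable def qFact (n : ℕ) : RatFunc ℚ :=
  ∏ i ∈ Finset.Icc 1 n, qInt i

/-- `P_n = ∏_{i=0}^{n−1} (x − v^{2i+1} − v^{−2i−1})` in `ℚ(v)[x]`. -/
noncomputable def Pbasis (n : ℕ) : Polynomial (RatFunc ℚ) :=
  ∏ i ∈ Finset.range n,
    (Polynomial.X - Polynomial.C (RatFunc.X ^ (2 * i + 1) + (RatFunc.X)⁻¹ ^ (2 * i + 1)))

/-- `P′_n = P_n / ((v − v^{−1})^n [n]!)` in `ℚ(v)[x]`. -/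
noncomputable def Pbasis' (n : ℕ) : Polynomial (RatFunc ℚ) :=
  Polynomial.C (((RatFunc.X - (RatFunc.X)⁻¹) ^ n * qFact n)⁻¹) * Pbasis n

/-- The copy of `ℤ[v,v^{−1}]` inside `ℚ(v)`, namely the subring generated by `v`
and `v^{−1}`. -/
noncomputable def ZLaurent : Subring (RatFunc ℚ) :=
  Subring.closure {RatFunc.X, (RatFunc.X)⁻¹}

/-- `inSpanP' S f` says that `f ∈ ℚ(v)[x]` is a `ℤ[v,v^{−1}]`-linear combination of
finitely many of the `P′_k` with `k ∈ S`. -/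
noncomputable def inSpanP' (S : Set ℕ) (f : Polynomial (RatFunc ℚ)) : Prop :=
  ∃ (s : Finset ℕ) (c : ℕ → ZLaurent), ↑s ⊆ S ∧
    f = ∑ k ∈ s, Polynomial.C ((c k : RatFunc ℚ)) * Pbasis' k

/-- The `ℤ[v,v^{−1}]`-subalgebra `𝓡` of `ℚ(v)[x]` generated by the `P′_n`, `n ≥ 1`,
realized as the subring generated by the constants `ℤ[v,v^{−1}]` together with the
`P′_n`, `n ≥ 1`. -/
noncomputable def Ralg : Subring (Polynomial (RatFunc ℚ)) :=
  Subring.closure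
    ((Polynomial.C '' (ZLaurent : Set (RatFunc ℚ))) ∪ {f | ∃ n : ℕ, 1 ≤ n ∧ f = Pbasis' n})


local notation "K" => RatFunc ℚ
noncomputable def Vv : RatFunc ℚ := RatFunc.X
noncomputable def Uv : RatFunc ℚ := (RatFunc.X)⁻¹
noncomputable def Wv : RatFunc ℚ := RatFunc.X - (RatFunc.X)⁻¹

lemma hV : (Vv : K) ≠ 0 := by unfold Vv; exact RatFunc.X_ne_zero
lemma hVU : Vv * Uv = 1 := mul_inv_cancel₀ hV
lemma hU : (Uv : K) ≠ 0 := by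
  unfold Uv; exact inv_ne_zero RatFunc.X_ne_zero

lemma pow_ne_one (n : ℕ) (hn : 0 < n) : (Vv:K) ^ n ≠ 1 := by
  intro h
  have : (Polynomial.X : Polynomial ℚ) ^ n = 1 := by
    apply RatFunc.algebraMap_injective ℚ
    simpa [map_pow, RatFunc.algebraMap_X, Vv] using h
  have := congrArg Polynomial.natDegree this
  simp [Polynomial.natDegree_X_pow] at this
  omega

lemma hW : (Wv : K) ≠ 0 := by
  intro h
  have hx : (Vv:K) = Uv := by
    have h' : Vv - Uv = 0 := h
    exact sub_eq_zero.mp h'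
  have : (Vv:K)^2 = 1 := by
    rw [pow_two]; nth_rewrite 2 [hx]; exact hVU
  exact pow_ne_one 2 (by norm_num) this

lemma qInt_mul_W (n : ℕ) : qInt n * Wv = Vv ^ n - Uv ^ n := by
  rw [qInt]; exact div_mul_cancel₀ _ hW

lemma qInt_ne (n : ℕ) (hn : 0 < n) : qInt n ≠ 0 := by
  intro h
  have h2 : (Vv:K) ^ n - Uv ^ n = 0 := by rw [← qInt_mul_W, h, zero_mul]
  have h3 : (Vv:K) ^ n = Uv ^ n := sub_eq_zero.mp h2
  have : (Vv:K) ^ (2*n) = 1 := by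
    calc (Vv:K)^(2*n) = Vv^n * Vv^n := by rw [two_mul, pow_add]
      _ = Vv^n * Uv^n := by rw [h3]
      _ = 1 := by rw [← mul_pow, hVU, one_pow]
  exact pow_ne_one _ (by omega) this

lemma qFact_succ (n : ℕ) : qFact (n+1) = qFact n * qInt (n+1) := by
  rw [qFact, qFact, Finset.prod_Icc_succ_top (by omega)]

lemma qFact_zero : qFact 0 = 1 := by simp [qFact]

lemma qFact_ne (n : ℕ) : qFact n ≠ 0 := by
  induction n with
  | zero => simp [qFact_zero]
  | succ n ih => rw [qFact_succ]; exact mul_ne_zero ih (qInt_ne _ (by omega))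

lemma VU_pow (a : ℕ) : (Vv:K)^a * Uv^a = 1 := by rw [← mul_pow, hVU, one_pow]

/-- key identity `[d+i][e+i] = [d][e] + [i][d+e+i]`, cleared of denominators. -/
lemma pow_key (d e i : ℕ) :
    ((Vv:K)^(d+i) - Uv^(d+i)) * (Vv^(e+i) - Uv^(e+i))
      = (Vv^d - Uv^d) * (Vv^e - Uv^e) + (Vv^i - Uv^i) * (Vv^(d+e+i) - Uv^(d+e+i)) := by
  have hA := VU_pow i
  linear_combination (Uv^(d+e) + Vv^(d+e) - Vv^d*Uv^e - Vv^e*Uv^d) * hA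

/-- key identity `[d+i][e+i] = [d][e] + [i][d+e+i]`. -/
lemma qInt_key (d e i : ℕ) :
    qInt (d+i) * qInt (e+i) = qInt d * qInt e + qInt i * qInt (d+e+i) := by
  have h : (qInt (d+i) * qInt (e+i)) * (Wv * Wv)
      = (qInt d * qInt e + qInt i * qInt (d+e+i)) * (Wv * Wv) := by
    have h1 := qInt_mul_W (d+i); have h2 := qInt_mul_W (e+i)
    have h3 := qInt_mul_W d; have h4 := qInt_mul_W e
    have h5 := qInt_mul_W i; have h6 := qInt_mul_W (d+e+i)
    calc (qInt (d+i) * qInt (e+i)) * (Wv * Wv)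
        = (qInt (d+i) * Wv) * (qInt (e+i) * Wv) := by ring
      _ = ((Vv:K)^(d+i) - Uv^(d+i)) * (Vv^(e+i) - Uv^(e+i)) := by rw [h1, h2]
      _ = (Vv^d - Uv^d) * (Vv^e - Uv^e) + (Vv^i - Uv^i) * (Vv^(d+e+i) - Uv^(d+e+i)) :=
          pow_key d e i
      _ = (qInt d * Wv) * (qInt e * Wv) + (qInt i * Wv) * (qInt (d+e+i) * Wv) := by
          rw [h3, h4, h5, h6]
      _ = (qInt d * qInt e + qInt i * qInt (d+e+i)) * (Wv * Wv) := by ring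
  exact mul_right_cancel₀ (mul_ne_zero hW hW) h

/-- `r_{j+d} - r_j = W^2 [d][2j+d+1]`. -/
lemma r_diff (j d : ℕ) :
    (Vv:K)^(2*(j+d)+1) + Uv^(2*(j+d)+1) - (Vv^(2*j+1) + Uv^(2*j+1))
      = Wv^2 * (qInt d * qInt (2*j+d+1)) := by
  have h1 := qInt_mul_W d; have h2 := qInt_mul_W (2*j+d+1)
  have hD := VU_pow d
  calc (Vv:K)^(2*(j+d)+1) + Uv^(2*(j+d)+1) - (Vv^(2*j+1) + Uv^(2*j+1))
      = ((Vv:K)^d - Uv^d) * (Vv^(2*j+d+1) - Uv^(2*j+d+1)) := by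
        linear_combination (Uv^(2*j+1) + Vv^(2*j+1)) * hD
    _ = (qInt d * Wv) * (qInt (2*j+d+1) * Wv) := by rw [h1, h2]
    _ = Wv^2 * (qInt d * qInt (2*j+d+1)) := by ring

/-- Pascal-type: `[k+s+1] = v^{k+1}[s] + v^{-s}[k+1]`. -/
lemma qInt_pascal (k s : ℕ) :
    qInt (k+s+1) = Vv^(k+1) * qInt s + Uv^s * qInt (k+1) := by
  have h : qInt (k+s+1) * Wv = (Vv^(k+1) * qInt s + Uv^s * qInt (k+1)) * Wv := by
    rw [qInt_mul_W]
    have h1 := qInt_mul_W s; have h2 := qInt_mul_W (k+1)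
    linear_combination (-(Vv^(k+1))) * h1 - Uv^s * h2
  exact mul_right_cancel₀ hW h

lemma qInt_succ (n : ℕ) : qInt (n+1) = Vv * qInt n + Uv^n := by
  have h : qInt (n+1) * Wv = (Vv * qInt n + Uv^n) * Wv := by
    rw [qInt_mul_W]
    have h1 := qInt_mul_W n
    have : (Wv:K) = Vv - Uv := rfl
    linear_combination (-Vv) * h1 - Uv^n * this
  exact mul_right_cancel₀ hW h

lemma qInt_zero : qInt 0 = 0 := by simp [qInt]

lemma V_mem : (Vv:K) ∈ ZLaurent := Subring.subset_closure (Or.inl rfl)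
lemma U_mem : (Uv:K) ∈ ZLaurent := Subring.subset_closure (Or.inr rfl)
lemma W_mem : (Wv:K) ∈ ZLaurent := sub_mem V_mem U_mem

lemma qInt_mem (n : ℕ) : qInt n ∈ ZLaurent := by
  induction n with
  | zero => rw [qInt_zero]; exact zero_mem _
  | succ n ih => rw [qInt_succ]; exact add_mem (mul_mem V_mem ih) (pow_mem U_mem n)

lemma qFact_mem (n : ℕ) : qFact n ∈ ZLaurent := by
  induction n with
  | zero => rw [qFact_zero]; exact one_mem _
  | succ n ih => rw [qFact_succ]; exact mul_mem ih (qInt_mem _)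

/-- balanced Gaussian binomial, defined by the Pascal recursion. -/
noncomputable def qbin : ℕ → ℕ → RatFunc ℚ
  | _, 0 => 1
  | 0, _+1 => 0
  | n+1, k+1 => Vv^(k+1) * qbin n (k+1) + Uv^(n-k) * qbin n k

lemma qbin_mem (n k : ℕ) : qbin n k ∈ ZLaurent := by
  induction n generalizing k with
  | zero => cases k with
    | zero => exact one_mem _
    | succ k => exact zero_mem _
  | succ n ih => cases k with
    | zero => exact one_mem _
    | succ k =>
      rw [qbin]
      exact add_mem (mul_mem (pow_mem V_mem _) (ih _)) (mul_mem (pow_mem U_mem _) (ih _))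

lemma qbin_hi (n k : ℕ) (h : n < k) : qbin n k = 0 := by
  induction n generalizing k with
  | zero => cases k with
    | zero => omega
    | succ k => rfl
  | succ n ih => cases k with
    | zero => omega
    | succ k => rw [qbin, ih _ (by omega), ih _ (by omega), mul_zero, mul_zero, add_zero]

lemma qbin_eq (n k : ℕ) (h : k ≤ n) :
    qbin n k * (qFact k * qFact (n-k)) = qFact n := by
  induction n generalizing k with
  | zero =>
    interval_cases k
    simp [qbin, qFact_zero]
  | succ n ih => cases k with
    | zero => show 1 * (qFact 0 * qFact (n+1)) = qFact (n+1); rw [qFact_zero]; ring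
    | succ k =>
      rcases Nat.lt_or_ge k n with hk | hk
      · -- k+1 ≤ n
        have e1 : n - k = (n - (k+1)) + 1 := by omega
        have ih1 := ih (k+1) (by omega)
        have ih2 := ih k (by omega)
        have hp : qInt (n+1) = Vv^(k+1) * qInt (n-k) + Uv^(n-k) * qInt (k+1) := by
          have := qInt_pascal k (n-k)
          rw [show k + (n-k) + 1 = n+1 by omega] at this
          exact this
        rw [qbin, show n+1-(k+1) = n - k by omega, qFact_succ n, hp]
        rw [qFact_succ k]
        rw [e1, qFact_succ (n - (k+1))]
        rw [e1, qFact_succ (n - (k+1))] at ih2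
        rw [qFact_succ k] at ih1
        linear_combination Vv^(k+1) * qInt (n-(k+1)+1) * ih1 + Uv^(n-(k+1)+1) * qInt (k+1) * ih2
      · -- k = n
        have hk' : k = n := by omega
        subst hk'
        rw [qbin, qbin_hi k (k+1) (by omega), mul_zero, zero_add]
        rw [show k+1-(k+1) = 0 by omega, show k - k = 0 by omega, qFact_zero, pow_zero]
        have ihk := ih k (by omega)
        rw [show k - k = 0 by omega, qFact_zero] at ihk
        calc 1 * qbin k k * (qFact (k+1) * 1) = qbin k k * (qFact k * 1) * qInt (k+1) := by
              rw [qFact_succ]; ring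
          _ = qFact k * qInt (k+1) := by rw [ihk]
          _ = qFact (k+1) := (qFact_succ k).symm

/-- The structure constants: `c(n,k,i) = (v-v⁻¹)^i [n+k]! / ([i]![n-i]![k-i]!)`. -/
noncomputable def coefC (n k i : ℕ) : RatFunc ℚ :=
  Wv^i * qFact (n+k) * (qFact i * qFact (n-i) * qFact (k-i))⁻¹

lemma coefC_eq (n k i : ℕ) (h1 : i ≤ n) (h2 : i ≤ k) :
    coefC n k i = Wv^i * qFact i * (qbin n i * (qbin k i * qbin (n+k) n)) := by
  have b1 := qbin_eq n i h1
  have b2 := qbin_eq k i h2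
  have b3 := qbin_eq (n+k) n (by omega)
  rw [show n + k - n = k by omega] at b3
  have hD : (qFact i * qFact (n-i) * qFact (k-i)) ≠ 0 :=
    mul_ne_zero (mul_ne_zero (qFact_ne _) (qFact_ne _)) (qFact_ne _)
  have key : (Wv^i * qFact i * (qbin n i * (qbin k i * qbin (n+k) n)))
      * (qFact i * qFact (n-i) * qFact (k-i)) = Wv^i * qFact (n+k) := by
    calc (Wv^i * qFact i * (qbin n i * (qbin k i * qbin (n+k) n)))
        * (qFact i * qFact (n-i) * qFact (k-i))
        = Wv^i * ((qbin n i * (qFact i * qFact (n-i)))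
            * ((qbin k i * (qFact i * qFact (k-i))) * qbin (n+k) n)) := by ring
      _ = Wv^i * (qFact n * (qFact k * qbin (n+k) n)) := by rw [b1, b2]
      _ = Wv^i * (qbin (n+k) n * (qFact n * qFact k)) := by ring
      _ = Wv^i * qFact (n+k) := by rw [b3]
  rw [coefC, ← key, mul_assoc, mul_inv_cancel₀ hD, mul_one]

lemma coefC_mem (n k i : ℕ) (h1 : i ≤ n) (h2 : i ≤ k) : coefC n k i ∈ ZLaurent := by
  rw [coefC_eq n k i h1 h2]
  exact mul_mem (mul_mem (pow_mem W_mem i) (qFact_mem i))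
    (mul_mem (qbin_mem _ _) (mul_mem (qbin_mem _ _) (qbin_mem _ _)))

noncomputable def rr (n : ℕ) : RatFunc ℚ := Vv^(2*n+1) + Uv^(2*n+1)

lemma Pbasis_def (n : ℕ) :
    Pbasis n = ∏ i ∈ Finset.range n, (Polynomial.X - Polynomial.C (rr i)) := rfl

lemma Pbasis'_def (n : ℕ) :
    Pbasis' n = Polynomial.C ((Wv^n * qFact n)⁻¹) * Pbasis n := rfl

lemma Pbasis_succ (n : ℕ) :
    Pbasis (n+1) = Pbasis n * (Polynomial.X - Polynomial.C (rr n)) := by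
  rw [Pbasis_def, Pbasis_def, Finset.prod_range_succ]

lemma Pbasis'_zero : Pbasis' 0 = 1 := by
  rw [Pbasis'_def, Pbasis_def]
  simp [qFact_zero]

lemma R1gen (m : ℕ) :
    Polynomial.C (Wv * qInt (m+1)) * Pbasis' (m+1)
      = (Polynomial.X - Polynomial.C (rr m)) * Pbasis' m := by
  rw [Pbasis'_def, Pbasis'_def, Pbasis_succ]
  have hs : Wv * qInt (m+1) * (Wv^(m+1) * qFact (m+1))⁻¹ = (Wv^m * qFact m)⁻¹ := by
    rw [qFact_succ]
    have h1 : (Wv:K) ≠ 0 := hW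
    have h2 : qFact m ≠ 0 := qFact_ne m
    have h3 : qInt (m+1) ≠ 0 := qInt_ne _ (by omega)
    field_simp
    ring
  rw [← mul_assoc, ← map_mul, hs]
  ring

lemma star (n d : ℕ) :
    (Polynomial.X - Polynomial.C (rr n)) * Pbasis' (n+d)
      = Polynomial.C (Wv * qInt (n+d+1)) * Pbasis' (n+d+1)
        + Polynomial.C (Wv^2 * (qInt d * qInt (2*n+d+1))) * Pbasis' (n+d) := by
  have h1 := R1gen (n+d)
  have hr : rr (n+d) - rr n = Wv^2 * (qInt d * qInt (2*n+d+1)) := by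
    have h := r_diff n d
    rw [rr, rr]
    linear_combination h
  calc (Polynomial.X - Polynomial.C (rr n)) * Pbasis' (n+d)
      = (Polynomial.X - Polynomial.C (rr (n+d))) * Pbasis' (n+d)
        + Polynomial.C (rr (n+d) - rr n) * Pbasis' (n+d) := by rw [map_sub]; ring
    _ = Polynomial.C (Wv * qInt (n+d+1)) * Pbasis' (n+d+1)
        + Polynomial.C (Wv^2 * (qInt d * qInt (2*n+d+1))) * Pbasis' (n+d) := by
          rw [← h1, hr]

lemma qInt_ne' (m : ℕ) : qInt (m+1) ≠ 0 := qInt_ne _ (Nat.succ_pos m)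

lemma coefC_div (n k i : ℕ) :
    coefC n k i = (Wv^i * qFact (n+k)) / (qFact i * qFact (n-i) * qFact (k-i)) := by
  rw [coefC, div_eq_mul_inv]

lemma Smid (i a b : ℕ) :
    Wv * qInt (i+1+a+1) * coefC (i+1+a+1) (i+1+b) (i+1)
      = coefC (i+1+a) (i+1+b) (i+1) * (Wv * qInt (i+1+a+b+1))
        + coefC (i+1+a) (i+1+b) i * (Wv^2 * (qInt (b+1) * qInt (2*(i+1+a)+(b+1)+1))) := by
  have hkey := qInt_key (a+1) (i+a+b+2) (i+1)
  rw [show a+1+(i+1) = i+1+a+1 by omega, show i+a+b+2+(i+1) = 2*i+a+b+2+1 by omega,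
      show a+1+(i+a+b+2)+(i+1) = 2*(i+1+a)+(b+1)+1 by omega] at hkey
  rw [coefC_div, coefC_div, coefC_div]
  rw [show i+1+a+1-(i+1) = a+1 by omega, show i+1+b-(i+1) = b by omega,
      show i+1+a-(i+1) = a by omega, show i+1+a-i = a+1 by omega,
      show i+1+b-i = b+1 by omega,
      show i+1+a+1+(i+1+b) = 2*i+a+b+2+1 by omega,
      show i+1+a+(i+1+b) = 2*i+a+b+2 by omega]
  rw [qFact_succ (2*i+a+b+2), qFact_succ i, qFact_succ a, qFact_succ b]
  rw [show i+1+a+b+1 = i+a+b+2 by omega]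
  have h1 : (Wv:K) ≠ 0 := hW
  have hfi : qFact i ≠ 0 := qFact_ne i
  have hfa : qFact a ≠ 0 := qFact_ne a
  have hfb : qFact b ≠ 0 := qFact_ne b
  have hqi : qInt (i+1) ≠ 0 := qInt_ne _ (by omega)
  have hqa : qInt (a+1) ≠ 0 := qInt_ne _ (by omega)
  have hqb : qInt (b+1) ≠ 0 := qInt_ne _ (by omega)
  rw [mul_div_assoc', div_mul_eq_mul_div, div_mul_eq_mul_div,
      div_add_div _ _ (show _ ≠ (0:K) by apply_rules [mul_ne_zero, qFact_ne, qInt_ne']) (show _ ≠ (0:K) by apply_rules [mul_ne_zero, qFact_ne, qInt_ne']),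
      div_eq_div_iff (show _ ≠ (0:K) by apply_rules [mul_ne_zero, qFact_ne, qInt_ne']) (show _ ≠ (0:K) by apply_rules [mul_ne_zero, qFact_ne, qInt_ne'])]
  linear_combination (Wv^(i+2) * qFact (2*i+a+b+2) * qFact i^2 * qFact a^2 * qFact b^2
      * qInt (i+1) * qInt (a+1) * qInt (b+1)) * hkey

lemma S0 (n k : ℕ) :
    Wv * qInt (n+1) * coefC (n+1) k 0 = coefC n k 0 * (Wv * qInt (n+k+1)) := by
  rw [coefC_div, coefC_div]
  simp only [Nat.sub_zero, qFact_zero, pow_zero]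
  rw [show n+1+k = n+k+1 by omega, qFact_succ (n+k), qFact_succ n]
  rw [mul_div_assoc', div_mul_eq_mul_div,
      div_eq_div_iff (show _ ≠ (0:K) by apply_rules [mul_ne_zero, qFact_ne, qInt_ne', one_ne_zero])
        (show _ ≠ (0:K) by apply_rules [mul_ne_zero, qFact_ne, qInt_ne', one_ne_zero])]
  ring

lemma Stop (n e : ℕ) :
    Wv * qInt (n+1) * coefC (n+1) (n+1+e) (n+1)
      = coefC n (n+1+e) n * (Wv^2 * (qInt (e+1) * qInt (2*n+(e+1)+1))) := by
  rw [coefC_div, coefC_div]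
  rw [show n+1-(n+1) = 0 by omega, show n+1+e-(n+1) = e by omega,
      show n-n = 0 by omega, show n+1+e-n = e+1 by omega,
      show n+1+(n+1+e) = 2*n+e+1+1 by omega, show n+(n+1+e) = 2*n+e+1 by omega,
      show 2*n+(e+1)+1 = 2*n+e+1+1 by omega]
  rw [qFact_succ (2*n+e+1), qFact_succ n, qFact_succ e, qFact_zero]
  rw [mul_div_assoc', div_mul_eq_mul_div,
      div_eq_div_iff (show _ ≠ (0:K) by apply_rules [mul_ne_zero, qFact_ne, qInt_ne', one_ne_zero])
        (show _ ≠ (0:K) by apply_rules [mul_ne_zero, qFact_ne, qInt_ne', one_ne_zero])]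
  ring

lemma Smid' (n k i : ℕ) (h1 : i < n) (h2 : n+1 ≤ k) :
    Wv * qInt (n+1) * coefC (n+1) k (i+1)
      = coefC n k (i+1) * (Wv * qInt (n+(k-i)))
        + coefC n k i * (Wv^2 * (qInt (k-i) * qInt (2*n+(k-i)+1))) := by
  obtain ⟨a, rfl⟩ : ∃ a, n = i+1+a := ⟨n-(i+1), by omega⟩
  obtain ⟨b, rfl⟩ : ∃ b, k = i+1+b := ⟨k-(i+1), by omega⟩
  rw [show i+1+b-i = b+1 by omega, show i+1+a+(b+1) = i+1+a+b+1 by omega]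
  exact Smid i a b

lemma Stop' (n k : ℕ) (h : n+1 ≤ k) :
    Wv * qInt (n+1) * coefC (n+1) k (n+1)
      = coefC n k n * (Wv^2 * (qInt (k-n) * qInt (2*n+(k-n)+1))) := by
  obtain ⟨e, rfl⟩ : ∃ e, k = n+1+e := ⟨k-(n+1), by omega⟩
  rw [show n+1+e-n = e+1 by omega]
  exact Stop n e

theorem prod_formula (n : ℕ) : ∀ k, n ≤ k →
    Pbasis' n * Pbasis' k
      = ∑ i ∈ Finset.range (n+1), Polynomial.C (coefC n k i) * Pbasis' (n+(k-i)) := by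
  induction n with
  | zero =>
    intro k hk
    rw [Finset.sum_range_one, Pbasis'_zero, one_mul, show (0:ℕ)+(k-0) = k by omega]
    have hc : coefC 0 k 0 = 1 := by
      rw [coefC]
      simp only [Nat.sub_zero, Nat.zero_add, qFact_zero, pow_zero, one_mul, Nat.zero_sub]
      exact mul_inv_cancel₀ (qFact_ne k)
    rw [hc, map_one, one_mul]
  | succ n ih =>
    intro k hk
    have hnk : n ≤ k := by omega
    have hC : (Polynomial.C (Wv * qInt (n+1)) : Polynomial (RatFunc ℚ)) ≠ 0 := by
      rw [ne_eq, Polynomial.C_eq_zero]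
      exact mul_ne_zero hW (qInt_ne' n)
    apply mul_left_cancel₀ hC
    have key0 : Polynomial.C (Wv * qInt (n+1) * coefC (n+1) k 0) * Pbasis' ((n+1)+(k-0))
        = Polynomial.C (coefC n k 0 * (Wv * qInt (n+(k-0)+1))) * Pbasis' (n+(k-0)+1) := by
      simp only [Nat.sub_zero]
      rw [show n+1+k = n+k+1 by omega]
      exact congrArg (fun z => Polynomial.C z * Pbasis' (n+k+1)) (S0 n k)
    have keytop : Polynomial.C (Wv * qInt (n+1) * coefC (n+1) k (n+1)) * Pbasis' ((n+1)+(k-(n+1)))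
        = Polynomial.C (coefC n k n * (Wv^2 * (qInt (k-n) * qInt (2*n+(k-n)+1))))
            * Pbasis' (n+(k-n)) := by
      rw [show (n+1)+(k-(n+1)) = n+(k-n) by omega]
      exact congrArg (fun z => Polynomial.C z * Pbasis' (n+(k-n))) (Stop' n k hk)
    have keymid : ∀ i, i < n →
        Polynomial.C (Wv * qInt (n+1) * coefC (n+1) k (i+1)) * Pbasis' ((n+1)+(k-(i+1)))
          = Polynomial.C (coefC n k (i+1) * (Wv * qInt (n+(k-(i+1))+1))) * Pbasis' (n+(k-(i+1))+1)
            + Polynomial.C (coefC n k i * (Wv^2 * (qInt (k-i) * qInt (2*n+(k-i)+1))))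
                * Pbasis' (n+(k-i)) := by
      intro i hi
      rw [show (n+1)+(k-(i+1)) = n+(k-i) by omega, show n+(k-(i+1))+1 = n+(k-i) by omega,
          ← add_mul, ← map_add]
      exact congrArg (fun z => Polynomial.C z * Pbasis' (n+(k-i))) (Smid' n k i hi hk)
    calc Polynomial.C (Wv * qInt (n+1)) * (Pbasis' (n+1) * Pbasis' k)
        = (Polynomial.C (Wv * qInt (n+1)) * Pbasis' (n+1)) * Pbasis' k := by ring
      _ = (Polynomial.X - Polynomial.C (rr n)) * (Pbasis' n * Pbasis' k) := by
          rw [R1gen n]; ring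
      _ = ∑ i ∈ Finset.range (n+1), Polynomial.C (coefC n k i)
            * ((Polynomial.X - Polynomial.C (rr n)) * Pbasis' (n+(k-i))) := by
          rw [ih k hnk, Finset.mul_sum]
          exact Finset.sum_congr rfl fun i _ => by ring
      _ = (∑ i ∈ Finset.range (n+1),
            Polynomial.C (coefC n k i * (Wv * qInt (n+(k-i)+1))) * Pbasis' (n+(k-i)+1))
          + (∑ i ∈ Finset.range (n+1),
            Polynomial.C (coefC n k i * (Wv^2 * (qInt (k-i) * qInt (2*n+(k-i)+1))))
              * Pbasis' (n+(k-i))) := by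
          rw [← Finset.sum_add_distrib]
          apply Finset.sum_congr rfl
          intro i _
          rw [star n (k-i), mul_add, ← mul_assoc, ← mul_assoc, ← map_mul, ← map_mul]
      _ = ∑ j ∈ Finset.range (n+1+1),
            Polynomial.C (Wv * qInt (n+1) * coefC (n+1) k j) * Pbasis' ((n+1)+(k-j)) := by
          rw [Finset.sum_range_succ'
            (fun j => Polynomial.C (Wv * qInt (n+1) * coefC (n+1) k j) * Pbasis' ((n+1)+(k-j))) (n+1)]
          rw [Finset.sum_range_succ
            (fun i => Polynomial.C (Wv * qInt (n+1) * coefC (n+1) k (i+1)) * Pbasis' ((n+1)+(k-(i+1)))) n]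
          rw [key0, keytop]
          rw [Finset.sum_congr rfl (fun i hi => keymid i (Finset.mem_range.mp hi))]
          rw [Finset.sum_add_distrib]
          rw [Finset.sum_range_succ'
            (fun i => Polynomial.C (coefC n k i * (Wv * qInt (n+(k-i)+1))) * Pbasis' (n+(k-i)+1)) n]
          rw [Finset.sum_range_succ
            (fun i => Polynomial.C (coefC n k i * (Wv^2 * (qInt (k-i) * qInt (2*n+(k-i)+1))))
              * Pbasis' (n+(k-i))) n]
          ring
      _ = Polynomial.C (Wv * qInt (n+1)) * ∑ j ∈ Finset.range (n+1+1),
            Polynomial.C (coefC (n+1) k j) * Pbasis' ((n+1)+(k-j)) := by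
          rw [Finset.mul_sum]
          exact Finset.sum_congr rfl fun j _ => by rw [map_mul]; ring

lemma span_zero (S : Set ℕ) : inSpanP' S 0 := by
  refine ⟨∅, fun _ => 0, by simp, by simp⟩

lemma span_single (S : Set ℕ) (k : ℕ) (hk : k ∈ S) (z : RatFunc ℚ) (hz : z ∈ ZLaurent) :
    inSpanP' S (Polynomial.C z * Pbasis' k) := by
  refine ⟨{k}, fun _ => ⟨z, hz⟩, by simpa using hk, by simp⟩

lemma span_self (S : Set ℕ) (k : ℕ) (hk : k ∈ S) : inSpanP' S (Pbasis' k) := by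
  have := span_single S k hk 1 (one_mem _)
  rwa [map_one, one_mul] at this

lemma ite_coe (P : Prop) [Decidable P] (a : ZLaurent) :
    ((if P then a else 0 : ZLaurent) : RatFunc ℚ) = if P then (a : RatFunc ℚ) else 0 := by
  split <;> rfl

lemma span_add (S : Set ℕ) (f g : Polynomial (RatFunc ℚ))
    (hf : inSpanP' S f) (hg : inSpanP' S g) : inSpanP' S (f + g) := by
  obtain ⟨s, c, hs, hfe⟩ := hf
  obtain ⟨t, d, ht, hge⟩ := hg
  refine ⟨s ∪ t, fun j => (if j ∈ s then c j else 0) + (if j ∈ t then d j else 0), ?_, ?_⟩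
  · intro j hj
    rcases Finset.mem_union.mp (by simpa using hj) with h | h
    · exact hs h
    · exact ht h
  · have hf2 : f = ∑ j ∈ s ∪ t,
        Polynomial.C (if j ∈ s then (c j : RatFunc ℚ) else 0) * Pbasis' j := by
      calc f = ∑ j ∈ s, Polynomial.C ((c j : RatFunc ℚ)) * Pbasis' j := hfe
        _ = ∑ j ∈ s, Polynomial.C (if j ∈ s then (c j : RatFunc ℚ) else 0) * Pbasis' j :=
            Finset.sum_congr rfl (fun j hj => by rw [if_pos hj])
        _ = _ := Finset.sum_subset Finset.subset_union_left
            (fun j _ hj => by rw [if_neg hj, map_zero, zero_mul])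
    have hg2 : g = ∑ j ∈ s ∪ t,
        Polynomial.C (if j ∈ t then (d j : RatFunc ℚ) else 0) * Pbasis' j := by
      calc g = ∑ j ∈ t, Polynomial.C ((d j : RatFunc ℚ)) * Pbasis' j := hge
        _ = ∑ j ∈ t, Polynomial.C (if j ∈ t then (d j : RatFunc ℚ) else 0) * Pbasis' j :=
            Finset.sum_congr rfl (fun j hj => by rw [if_pos hj])
        _ = _ := Finset.sum_subset Finset.subset_union_right
            (fun j _ hj => by rw [if_neg hj, map_zero, zero_mul])
    rw [hf2, hg2, ← Finset.sum_add_distrib]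
    apply Finset.sum_congr rfl
    intro j hj
    rw [← add_mul, ← map_add]
    congr 2
    push_cast [ite_coe]
    ring

lemma span_Cmul (S : Set ℕ) (z : RatFunc ℚ) (hz : z ∈ ZLaurent) (f : Polynomial (RatFunc ℚ))
    (hf : inSpanP' S f) : inSpanP' S (Polynomial.C z * f) := by
  obtain ⟨s, c, hs, hfe⟩ := hf
  refine ⟨s, fun j => ⟨z, hz⟩ * c j, hs, ?_⟩
  rw [hfe, Finset.mul_sum]
  apply Finset.sum_congr rfl
  intro j hj
  push_cast
  rw [map_mul]
  ring

lemma span_neg (S : Set ℕ) (f : Polynomial (RatFunc ℚ))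
    (hf : inSpanP' S f) : inSpanP' S (-f) := by
  have := span_Cmul S (-1) (neg_mem (one_mem _)) f hf
  rwa [map_neg, map_one, neg_one_mul] at this

lemma span_sum (S : Set ℕ) (s : Finset ℕ) (F : ℕ → Polynomial (RatFunc ℚ))
    (hF : ∀ j ∈ s, inSpanP' S (F j)) : inSpanP' S (∑ j ∈ s, F j) :=
  Finset.sum_induction F _ (fun a b ha hb => span_add S a b ha hb) (span_zero S) hF

lemma core_le (n k m : ℕ) (hnk : n ≤ k) (hmk : m ≤ k) :
    inSpanP' {j : ℕ | m ≤ j} (Pbasis' n * Pbasis' k) := by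
  refine ⟨(Finset.range (n+1)).image (fun i => n+(k-i)),
    fun j => if h : n ≤ k ∧ k ≤ j ∧ j ≤ n+k then
      ⟨coefC n k (n+k-j), coefC_mem n k (n+k-j) (by omega) (by omega)⟩ else 0, ?_, ?_⟩
  · intro j hj
    simp only [Finset.coe_image, Set.mem_image, Finset.mem_coe, Finset.mem_range] at hj
    obtain ⟨i, hi, rfl⟩ := hj
    simp only [Set.mem_setOf_eq]
    omega
  · rw [prod_formula n k hnk]
    rw [Finset.sum_image (fun i hi i' hi' h => by
      simp only [Finset.mem_coe, Finset.mem_range] at hi hi'; omega)]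
    apply Finset.sum_congr rfl
    intro i hi
    simp only [Finset.mem_range] at hi
    congr 1
    beta_reduce
    rw [dif_pos ⟨hnk, by omega, by omega⟩]
    have : n+k-(n+(k-i)) = i := by omega
    simp only [this]

lemma core (n k m : ℕ) (hmk : m ≤ k) :
    inSpanP' {j : ℕ | m ≤ j} (Pbasis' n * Pbasis' k) := by
  rcases le_total n k with h | h
  · exact core_le n k m h hmk
  · rw [mul_comm]
    exact core_le k n m h (le_trans hmk h)

/-- For every `m ≥ 0`, the `ℤ[v,v^{−1}]`-span `𝓡_m` of `{P′_k : k ≥ m}`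
is an ideal of `𝓡`: for every `y ∈ 𝓡` and every `k ≥ m`, the product `y · P′_k` is a
`ℤ[v,v^{−1}]`-linear combination of finitely many `P′_j` with `j ≥ m`. -/
theorem span_Pprime_tail_is_ideal (m : ℕ) :
    ∀ y ∈ Ralg, ∀ k : ℕ, m ≤ k → inSpanP' {j : ℕ | m ≤ j} (y * Pbasis' k) := by
  intro y hy
  induction hy using Subring.closure_induction with
  | mem x hx =>
    intro k hk
    rcases hx with ⟨z, hz, rfl⟩ | ⟨n, _, rfl⟩
    · exact span_single _ k hk z hz
    · exact core n k m hk
  | zero => intro k hk; rw [zero_mul]; exact span_zero _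
  | one => intro k hk; rw [one_mul]; exact span_self _ k hk
  | add x y hx hy ihx ihy =>
    intro k hk
    rw [add_mul]
    exact span_add _ _ _ (ihx k hk) (ihy k hk)
  | neg x hx ihx =>
    intro k hk
    rw [neg_mul]
    exact span_neg _ _ (ihx k hk)
  | mul x y hx hy ihx ihy =>
    intro k hk
    obtain ⟨s, c, hs, hye⟩ := ihy k hk
    rw [mul_assoc, hye, Finset.mul_sum]
    have : ∀ j ∈ s, x * (Polynomial.C ((c j : RatFunc ℚ)) * Pbasis' j)
        = Polynomial.C ((c j : RatFunc ℚ)) * (x * Pbasis' j) := fun j hj => by ring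
    rw [Finset.sum_congr rfl this]
    apply span_sum
    intro j hj
    exact span_Cmul _ _ (c j).2 _ (ihx j (hs hj))
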